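/- Let $g_r \in \mathbb{Z}_2[w_2,w_3,w_4]$ satisfy $g_0=1$, $g_{-1}=g_{-2}=g_{-3}=0$, $g_r = w_2 g_{r-2} + w_3 g_{r-3} + w_4 g_{r-4}$ for $r\geq 1$. Then for every $t\geq 2$, $g_{2^t-3}=0$. -/
import Mathlib


open MvPolynomial

/-- In `ℤ₂[w₂,w₃,w₄]` (with `X 0 = w₂`, `X 1 = w₃`, `X 2 = w₄`), with the
sequence `g_r` as above, `g_{2^t - 3} = 0` for every `t ≥ 2`. -/
theorem stmt_7 (g : ℤ → MvPolynomial (Fin 3) (ZMod 2))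
    (hneg : ∀ r : ℤ, -3 ≤ r → r < 0 → g r = 0)
    (h0 : g 0 = 1)
    (hrec : ∀ r : ℤ, 1 ≤ r →
      g r = X 0 * g (r - 2) + X 1 * g (r - 3) + X 2 * g (r - 4)) :
    ∀ t : ℕ, 2 ≤ t → g ((2 : ℤ) ^ t - 3) = 0 := by
  have h2 : (2 : MvPolynomial (Fin 3) (ZMod 2)) = 0 := by
    have := CharP.cast_eq_zero (MvPolynomial (Fin 3) (ZMod 2)) 2
    simpa using this
  have hn1 : g (-1) = 0 := hneg (-1) (by norm_num) (by norm_num)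
  have hn2 : g (-2) = 0 := hneg (-2) (by norm_num) (by norm_num)
  have hn3 : g (-3) = 0 := hneg (-3) (by norm_num) (by norm_num)
  have hg1 : g 1 = 0 := by
    have h := hrec 1 (by norm_num)
    norm_num [hn1, hn2, hn3] at h
    exact h
  have hg2 : g 2 = X 0 := by
    have h := hrec 2 (by norm_num)
    norm_num [hn1, hn2, h0] at h
    exact h
  have hg3 : g 3 = X 1 := by
    have h := hrec 3 (by norm_num)
    norm_num [hn1, hg1, h0] at h
    exact h
  have key : ∀ k : ℕ,
      g (2*(k:ℤ)) = (g (k:ℤ))^2 + X 0 * (g ((k:ℤ)-1))^2 + X 2 * (g ((k:ℤ)-2))^2 ∧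
      g (2*(k:ℤ)+1) = X 1 * (g ((k:ℤ)-1))^2 := by
    intro k
    induction k using Nat.strong_induction_on with
    | _ k ih =>
      obtain _|_|k := k
      · constructor
        · norm_num [h0, hn1, hn2]
        · norm_num [hg1, hn1]
      · constructor
        · norm_num [hg2, hg1, h0, hn1]
        · norm_num [hg3, h0]
      · push_cast
        have hB1 := (ih (k+1) (by omega)).1
        have hA1 := (ih (k+1) (by omega)).2
        have hB0 := (ih k (by omega)).1
        have hA0 := (ih k (by omega)).2
        push_cast at hB1 hA1 hB0 hA0
        rw [show (2:ℤ)*((k:ℤ)+1) = 2*(k:ℤ)+1+1 by ring,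
            show ((k:ℤ)+1)-1 = (k:ℤ) by ring,
            show ((k:ℤ)+1)-2 = (k:ℤ)-1 by ring] at hB1
        rw [show (2:ℤ)*((k:ℤ)+1)+1 = 2*(k:ℤ)+3 by ring,
            show ((k:ℤ)+1)-1 = (k:ℤ) by ring] at hA1
        have h4 := hrec (2*(k:ℤ)+4) (by omega)
        rw [show (2*(k:ℤ)+4)-2 = 2*(k:ℤ)+1+1 by ring,
            show (2*(k:ℤ)+4)-3 = 2*(k:ℤ)+1 by ring,
            show (2*(k:ℤ)+4)-4 = 2*(k:ℤ) by ring] at h4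
        have h5 := hrec (2*(k:ℤ)+5) (by omega)
        rw [show (2*(k:ℤ)+5)-2 = 2*(k:ℤ)+3 by ring,
            show (2*(k:ℤ)+5)-3 = 2*(k:ℤ)+1+1 by ring,
            show (2*(k:ℤ)+5)-4 = 2*(k:ℤ)+1 by ring] at h5
        have hK2 := hrec ((k:ℤ)+1+1) (by omega)
        rw [show ((k:ℤ)+1+1)-2 = (k:ℤ) by ring,
            show ((k:ℤ)+1+1)-3 = (k:ℤ)-1 by ring,
            show ((k:ℤ)+1+1)-4 = (k:ℤ)-2 by ring] at hK2
        constructor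
        · rw [show (2:ℤ)*((k:ℤ)+1+1) = 2*(k:ℤ)+4 by ring,
              show ((k:ℤ)+1+1)-1 = (k:ℤ)+1 by ring,
              show ((k:ℤ)+1+1)-2 = (k:ℤ) by ring]
          rw [h4, hB1, hA0, hB0, hK2]
          linear_combination (-(X 0 * X 1 * g (k:ℤ) * g ((k:ℤ)-1))
            - X 0 * X 2 * g (k:ℤ) * g ((k:ℤ)-2)
            - X 1 * X 2 * g ((k:ℤ)-1) * g ((k:ℤ)-2)
            + X 0 * X 2 * (g ((k:ℤ)-1))^2) * h2
        · rw [show (2:ℤ)*((k:ℤ)+1+1)+1 = 2*(k:ℤ)+5 by ring,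
              show ((k:ℤ)+1+1)-1 = (k:ℤ)+1 by ring]
          rw [h5, hA1, hB1, hA0]
          linear_combination (X 0 * X 1 * (g (k:ℤ))^2
            + X 1 * X 2 * (g ((k:ℤ)-1))^2) * h2
  intro t ht
  induction t, ht using Nat.le_induction with
  | base => norm_num [hg1]
  | succ t ht ih =>
    have hk := (key (2^t - 2)).2
    have hcast : ((2^t - 2 : ℕ) : ℤ) = 2^t - 2 := by
      have : 2 ≤ 2^t := by
        calc (2:ℕ) = 2^1 := by norm_num
        _ ≤ 2^t := Nat.pow_le_pow_right (by norm_num) (by omega)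
      push_cast [this]
      ring
    rw [hcast] at hk
    rw [show (2:ℤ)*((2:ℤ)^t-2)+1 = 2^(t+1) - 3 by ring,
        show ((2:ℤ)^t-2)-1 = 2^t - 3 by ring] at hk
    rw [hk, ih]
    ring
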